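/- arXiv:0906.2031 — 3 statements merged into one kernel-verified Lean document; each statement's English description precedes it below -/
import Mathlib

section
/- Let μ be a Borel probability measure on the s-dimensional torus T^s, let k be an odd natural number, and let P^{(k)}_j be the partition of T^s into cubes of side 2π/k^j. For each atom P, let P̂ be the cube with the same center as P but side 2π/k^{j-1}. Then for every δ > 0 and every j ≥ 1, μ({x : μ(P^{(k)}_j(x)) ≥ δ μ(P̂^{(k)}_j(x))}) ≥ 1 − δ k^s. -/
/- STATEMENT 0: Mañé's partition lemma on the torus (first inequality).
`Torus s` is the `s`-dimensional torus `(ℝ/2πℤ)^s`.  For an odd `k`, `cubeAtom s k j x`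
is the atom of the partition `P^{(k)}_j` of the torus into cubes of side `2π/k^j`
containing `x`, and `hatCube s k j x` is the concentric cube of side `2π/k^{j-1}`
(the union of the `k^s` atoms whose indices differ from that of `x` by at most
`(k-1)/2` in each coordinate, modulo `k^j`). -/

open MeasureTheory Set

noncomputable section

abbrev Torus (s : ℕ) := Fin s → AddCircle (2 * Real.pi)

/-- The canonical representative in `[0, 2π)` of a point of the circle `ℝ/2πℤ`. -/
def circleRep (x : AddCircle (2 * Real.pi)) : ℝ :=
  haveI : Fact ((0:ℝ) < 2 * Real.pi) := ⟨by positivity⟩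
  ((AddCircle.equivIco (2 * Real.pi) 0 x : Set.Ico (0:ℝ) (0 + 2 * Real.pi)) : ℝ)

/-- The index (in `{0, …, k^j - 1}`, as an integer) of the arc of length `2π/k^j`
containing the point `x` of the circle. -/
def cubeIdx (k j : ℕ) (x : AddCircle (2 * Real.pi)) : ℤ :=
  ⌊circleRep x * (k : ℝ) ^ j / (2 * Real.pi)⌋

lemma measurable_circleRep : Measurable circleRep := by
  haveI : Fact ((0:ℝ) < 2 * Real.pi) := ⟨by positivity⟩
  exact measurable_subtype_coe.comp (AddCircle.measurableEquivIco (T := 2*Real.pi) 0).measurable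

lemma measurable_cubeIdx (k j : ℕ) : Measurable (cubeIdx k j) :=
  ((measurable_circleRep.mul_const _).div_const _).floor

lemma circleRep_mem (x : AddCircle (2 * Real.pi)) : circleRep x ∈ Ico (0:ℝ) (2*Real.pi) := by
  haveI : Fact ((0:ℝ) < 2 * Real.pi) := ⟨by positivity⟩
  have := (AddCircle.equivIco (2*Real.pi) 0 x).2
  simpa [circleRep] using this

lemma cubeIdx_nonneg (k j : ℕ) (x : AddCircle (2 * Real.pi)) : 0 ≤ cubeIdx k j x := by
  have h := circleRep_mem x
  have hp := Real.pi_pos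
  have : (0:ℝ) ≤ circleRep x * (k : ℝ) ^ j / (2 * Real.pi) := by
    apply div_nonneg (mul_nonneg h.1 (by positivity)) (by positivity)
  exact Int.floor_nonneg.2 this

lemma cubeIdx_lt (k j : ℕ) (hk : k ≠ 0) (x : AddCircle (2 * Real.pi)) :
    cubeIdx k j x < (k:ℤ) ^ j := by
  have h := circleRep_mem x
  have hπ := Real.pi_pos
  have hkj : (0:ℝ) < (k:ℝ)^j := by positivity
  have : circleRep x * (k : ℝ) ^ j / (2 * Real.pi) < (k:ℝ)^j := by
    rw [div_lt_iff₀ (by positivity)]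
    calc circleRep x * (k:ℝ)^j < (2*Real.pi) * (k:ℝ)^j := by
          exact mul_lt_mul_of_pos_right h.2 hkj
      _ = (k:ℝ)^j * (2*Real.pi) := by ring
  have h2 : (circleRep x * (k : ℝ) ^ j / (2 * Real.pi)) < ((((k:ℤ)^j : ℤ)) : ℝ) := by
    push_cast; exact this
  exact Int.floor_lt.2 h2

/-- The atom of the partition `P^{(k)}_j` of the torus into cubes of side `2π/k^j`
containing `x`. -/
def cubeAtom (s k j : ℕ) (x : Torus s) : Set (Torus s) :=
  {y | ∀ i, cubeIdx k j (y i) = cubeIdx k j (x i)}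

/-- The cube `P̂` concentric with the atom of `x`, of side `2π/k^{j-1}` (for odd `k`):
the union of the atoms whose index differs by at most `(k-1)/2` in each coordinate,
modulo `k^j`. -/
def hatCube (s k j : ℕ) (x : Torus s) : Set (Torus s) :=
  {y | ∀ i, ∃ d : ℤ, |d| ≤ ((k : ℤ) - 1) / 2 ∧
    ((cubeIdx k j (y i) : ZMod (k ^ j)) = (cubeIdx k j (x i) : ZMod (k ^ j)) + (d : ZMod (k ^ j)))}

theorem mane_partition_lemma_hat (s k j : ℕ) (hk : Odd k) (hj : 1 ≤ j)
    (μ : Measure (Torus s)) [IsProbabilityMeasure μ] (δ : ENNReal) (hδ : 0 < δ) :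
    1 - δ * (k : ENNReal) ^ s ≤
      μ {x : Torus s | δ * μ (hatCube s k j x) ≤ μ (cubeAtom s k j x)} := by
  classical
  have hk0 : k ≠ 0 := by rcases hk with ⟨m, hm⟩; omega
  have hk1 : 1 ≤ k := Nat.one_le_iff_ne_zero.2 hk0
  haveI : NeZero (k ^ j) := ⟨pow_ne_zero _ hk0⟩
  set N : ℕ := k ^ j with hN
  -- the index map
  set f : Torus s → (Fin s → ZMod N) := fun x i => ((cubeIdx k j (x i) : ℤ) : ZMod N) with hfdef
  -- cast injectivity on the index range
  have hcast : ∀ z w : AddCircle (2 * Real.pi),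
      ((cubeIdx k j z : ZMod N) = (cubeIdx k j w : ZMod N)) ↔ cubeIdx k j z = cubeIdx k j w := by
    intro z w
    constructor
    · intro h
      rw [ZMod.intCast_eq_intCast_iff'] at h
      have hz1 := cubeIdx_nonneg k j z
      have hz2 := cubeIdx_lt k j hk0 z
      have hw1 := cubeIdx_nonneg k j w
      have hw2 := cubeIdx_lt k j hk0 w
      have hNc : ((N:ℤ)) = (k:ℤ)^j := by push_cast [hN]; ring
      rwa [Int.emod_eq_of_lt hz1 (by rw [hNc]; exact hz2),
        Int.emod_eq_of_lt hw1 (by rw [hNc]; exact hw2)] at h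
    · intro h; rw [h]
  -- atoms as fibers
  have hatom : ∀ x, cubeAtom s k j x = f ⁻¹' {f x} := by
    intro x; ext y
    simp only [cubeAtom, mem_setOf_eq, mem_preimage, mem_singleton_iff, hfdef, funext_iff]
    exact forall_congr' fun i => (hcast _ _).symm
  -- measurability of fibers
  have hmeas : ∀ a : Fin s → ZMod N, MeasurableSet (f ⁻¹' {a}) := by
    intro a
    have : f ⁻¹' {a} = ⋂ i, (fun y : Torus s => y i) ⁻¹' (cubeIdx k j ⁻¹' {m : ℤ | (m : ZMod N) = a i}) := by
      ext y; simp [hfdef, funext_iff, mem_iInter]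
    rw [this]
    exact MeasurableSet.iInter fun i =>
      ((measurable_cubeIdx k j).comp (measurable_pi_apply i))
        ((Set.to_countable _).measurableSet)
  have hdisj : Pairwise (Function.onFun Disjoint fun a : Fin s → ZMod N => f ⁻¹' {a}) :=
    pairwise_disjoint_fiber f
  set ν : (Fin s → ZMod N) → ENNReal := fun a => μ (f ⁻¹' {a}) with hνdef
  -- total mass
  have htotal : ∑ a : Fin s → ZMod N, ν a = 1 := by
    have hcover : ⋃ a : Fin s → ZMod N, f ⁻¹' {a} = univ := by
      ext x; simp only [mem_iUnion, mem_preimage, mem_singleton_iff, mem_univ, iff_true]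
      exact ⟨f x, rfl⟩
    calc ∑ a : Fin s → ZMod N, ν a = ∑' a : Fin s → ZMod N, ν a := (tsum_fintype _).symm
      _ = μ (⋃ a : Fin s → ZMod N, f ⁻¹' {a}) := (measure_iUnion hdisj hmeas).symm
      _ = 1 := by rw [hcover]; exact measure_univ
  -- the displacement set
  set D : Finset ℤ := Finset.Icc (-(((k:ℤ)-1)/2)) (((k:ℤ)-1)/2) with hDdef
  have hDcard : D.card ≤ k := by
    rw [hDdef, Int.card_Icc]
    omega
  set H : (Fin s → ZMod N) → Finset (Fin s → ZMod N) :=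
    fun a => Finset.univ.filter (fun b => ∀ i, ∃ d ∈ D, b i = a i + (d : ZMod N)) with hHdef
  -- hat cubes as unions of fibers
  have hhat : ∀ x, hatCube s k j x = ⋃ b ∈ H (f x), f ⁻¹' {b} := by
    intro x; ext y
    simp only [hatCube, mem_setOf_eq, mem_iUnion, mem_preimage, mem_singleton_iff, hHdef,
      Finset.mem_filter, Finset.mem_univ, true_and, hDdef, Finset.mem_Icc]
    constructor
    · intro h
      exact ⟨f y, fun i => by
        obtain ⟨d, hd, he⟩ := h i
        exact ⟨d, abs_le.1 hd, he⟩, rfl⟩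
    · rintro ⟨b, hb, rfl⟩
      intro i
      obtain ⟨d, hd, he⟩ := hb i
      exact ⟨d, abs_le.2 hd, he⟩
  have hμhat : ∀ x, μ (hatCube s k j x) = ∑ b ∈ H (f x), ν b := by
    intro x
    rw [hhat x]
    exact measure_biUnion_finset (hdisj.set_pairwise _) fun b _ => hmeas b
  -- the good and bad index sets
  set Good : Finset (Fin s → ZMod N) :=
    Finset.univ.filter (fun a => δ * ∑ b ∈ H a, ν b ≤ ν a) with hGdef
  set Bad : Finset (Fin s → ZMod N) :=
    Finset.univ.filter (fun a => ¬ (δ * ∑ b ∈ H a, ν b ≤ ν a)) with hBdef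
  have hSset : {x : Torus s | δ * μ (hatCube s k j x) ≤ μ (cubeAtom s k j x)}
      = ⋃ a ∈ Good, f ⁻¹' {a} := by
    ext x
    simp only [mem_setOf_eq, mem_iUnion, mem_preimage, mem_singleton_iff, hGdef,
      Finset.mem_filter, Finset.mem_univ, true_and]
    rw [hμhat x, hatom x]
    constructor
    · intro h; exact ⟨f x, h, rfl⟩
    · rintro ⟨a, ha, rfl⟩; exact ha
  have hμS : μ {x : Torus s | δ * μ (hatCube s k j x) ≤ μ (cubeAtom s k j x)}
      = ∑ a ∈ Good, ν a := by
    rw [hSset]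
    exact measure_biUnion_finset (hdisj.set_pairwise _) fun b _ => hmeas b
  -- counting: each fiber lies in at most k^s hat cubes
  have hcount : ∀ b : Fin s → ZMod N,
      (Finset.univ.filter (fun a => b ∈ H a)).card ≤ k ^ s := by
    intro b
    have hsub : Finset.univ.filter (fun a => b ∈ H a) ⊆
        Fintype.piFinset (fun i => D.image (fun d : ℤ => b i - (d : ZMod N))) := by
      intro a ha
      rw [Finset.mem_filter] at ha
      rw [Fintype.mem_piFinset]
      intro i
      obtain ⟨d, hd, he⟩ := (by simpa [hHdef] using ha.2 : ∀ i, ∃ d ∈ D, b i = a i + (d : ZMod N)) i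
      rw [Finset.mem_image]
      exact ⟨d, hd, by rw [he]; ring⟩
    calc (Finset.univ.filter (fun a => b ∈ H a)).card
        ≤ (Fintype.piFinset (fun i => D.image (fun d : ℤ => b i - (d : ZMod N)))).card :=
          Finset.card_le_card hsub
      _ = ∏ i, (D.image (fun d : ℤ => b i - (d : ZMod N))).card := Fintype.card_piFinset _
      _ ≤ ∏ _i : Fin s, k := Finset.prod_le_prod' fun i _ =>
          le_trans Finset.card_image_le hDcard
      _ = k ^ s := by simp [Finset.prod_const]
  -- the bad mass is small
  have hbad : ∑ a ∈ Bad, ν a ≤ δ * (k : ENNReal) ^ s := by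
    have step1 : ∑ a ∈ Bad, ν a ≤ δ * ∑ a ∈ Bad, ∑ b ∈ H a, ν b := by
      rw [Finset.mul_sum]
      refine Finset.sum_le_sum fun a ha => ?_
      rw [hBdef, Finset.mem_filter] at ha
      exact le_of_lt (lt_of_not_ge ha.2)
    have step2 : ∑ a ∈ Bad, ∑ b ∈ H a, ν b ≤ (k : ENNReal) ^ s := by
      calc ∑ a ∈ Bad, ∑ b ∈ H a, ν b
          ≤ ∑ a : Fin s → ZMod N, ∑ b ∈ H a, ν b :=
            Finset.sum_le_sum_of_subset (Finset.subset_univ _)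
        _ = ∑ a : Fin s → ZMod N, ∑ b : Fin s → ZMod N, if b ∈ H a then ν b else 0 := by
            refine Finset.sum_congr rfl fun a _ => ?_
            rw [Finset.sum_ite_mem, Finset.univ_inter]
        _ = ∑ b : Fin s → ZMod N, ∑ a : Fin s → ZMod N, if b ∈ H a then ν b else 0 :=
            Finset.sum_comm
        _ = ∑ b : Fin s → ZMod N, ((Finset.univ.filter (fun a => b ∈ H a)).card : ENNReal) * ν b := by
            refine Finset.sum_congr rfl fun b _ => ?_
            rw [← Finset.sum_filter, Finset.sum_const, nsmul_eq_mul]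
        _ ≤ ∑ b : Fin s → ZMod N, ((k:ENNReal) ^ s) * ν b := by
            refine Finset.sum_le_sum fun b _ => ?_
            refine mul_le_mul_left ?_ _
            calc ((Finset.univ.filter (fun a => b ∈ H a)).card : ENNReal)
                ≤ ((k ^ s : ℕ) : ENNReal) := by exact_mod_cast hcount b
              _ = (k:ENNReal) ^ s := by push_cast; ring
        _ = (k:ENNReal) ^ s * ∑ b : Fin s → ZMod N, ν b := by rw [Finset.mul_sum]
        _ = (k:ENNReal) ^ s := by rw [htotal, mul_one]
    calc ∑ a ∈ Bad, ν a ≤ δ * ∑ a ∈ Bad, ∑ b ∈ H a, ν b := step1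
      _ ≤ δ * (k:ENNReal) ^ s := mul_le_mul_right step2 _
  -- conclude
  have hsplit : ∑ a ∈ Good, ν a + ∑ a ∈ Bad, ν a = 1 := by
    rw [hGdef, hBdef, Finset.sum_filter_add_sum_filter_not, htotal]
  rw [hμS]
  rw [tsub_le_iff_right]
  calc (1:ENNReal) = ∑ a ∈ Good, ν a + ∑ a ∈ Bad, ν a := hsplit.symm
    _ ≤ ∑ a ∈ Good, ν a + δ * (k:ENNReal) ^ s := add_le_add_right hbad _

end
end

section
/- Let μ be a Borel probability measure on T^s, k an odd natural, and for each atom P of the cube partition P^{(k)}_j let P̃ denote the concentric cube of side 6π/k^{j-1}. Then for every δ > 0 and j ≥ 1, μ({x : μ(P^{(k)}_j(x)) ≥ δ μ(P̃^{(k)}_j(x))}) ≥ 1 − δ 3^s k^s. -/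
/- STATEMENT 1: Mañé's partition lemma on the torus (second inequality).
`Torus s` is the `s`-dimensional torus `(ℝ/2πℤ)^s`.  For an odd `k`, `cubeAtom s k j x`
is the atom of the partition `P^{(k)}_j` of the torus into cubes of side `2π/k^j`
containing `x`, and `hatCube s k j x` is the concentric cube of side `2π/k^{j-1}`
(the union of the `k^s` atoms whose indices differ from that of `x` by at most
`(k-1)/2` in each coordinate, modulo `k^j`). -/

open MeasureTheory Set

noncomputable section

/-- The cube `P̃` concentric with the atom of `x`, of side `6π/k^{j-1}` (for odd `k`):
the union of the atoms whose index differs by at most `(3k-1)/2` in each coordinate,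
modulo `k^j`. -/
def tildeCube (s k j : ℕ) (x : Torus s) : Set (Torus s) :=
  {y | ∀ i, ∃ d : ℤ, |d| ≤ (3 * (k : ℤ) - 1) / 2 ∧
    ((cubeIdx k j (y i) : ZMod (k ^ j)) = (cubeIdx k j (x i) : ZMod (k ^ j)) + (d : ZMod (k ^ j)))}

namespace ManeAux

open scoped Classical

lemma circleRep_mem (x : AddCircle (2 * Real.pi)) :
    circleRep x ∈ Set.Ico (0 : ℝ) (2 * Real.pi) := by
  haveI : Fact ((0:ℝ) < 2 * Real.pi) := ⟨by positivity⟩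
  have h : circleRep x ∈ Set.Ico (0 : ℝ) (0 + 2 * Real.pi) :=
    (AddCircle.equivIco (2 * Real.pi) 0 x).2
  rwa [zero_add] at h

lemma measurable_circleRep : Measurable circleRep := by
  haveI : Fact ((0:ℝ) < 2 * Real.pi) := ⟨by positivity⟩
  exact measurable_subtype_coe.comp (AddCircle.measurableEquivIco (T := 2 * Real.pi) 0).measurable

lemma measurable_cubeIdx (k j : ℕ) : Measurable (cubeIdx k j) :=
  ((measurable_circleRep.mul_const _).div_const _).floor

lemma cubeIdx_mem (k j : ℕ) (hk : 0 < k) (x : AddCircle (2 * Real.pi)) :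
    cubeIdx k j x ∈ Finset.Ico (0 : ℤ) ((k : ℤ) ^ j) := by
  obtain ⟨h0, h1⟩ := circleRep_mem x
  have hπ : (0:ℝ) < 2 * Real.pi := by positivity
  have hkj : (0:ℝ) < (k : ℝ) ^ j := by positivity
  rw [Finset.mem_Ico]
  constructor
  · apply Int.le_floor.2
    simp only [Int.cast_zero]
    positivity
  · apply Int.floor_lt.2
    push_cast
    rw [div_lt_iff₀ hπ]
    calc circleRep x * (k : ℝ) ^ j < 2 * Real.pi * (k : ℝ) ^ j :=
          mul_lt_mul_of_pos_right h1 hkj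
      _ = (k : ℝ) ^ j * (2 * Real.pi) := by ring

/-- The atom with a given index tuple. -/
def A (s k j : ℕ) (p : Fin s → ℤ) : Set (Torus s) :=
  {y | ∀ i, cubeIdx k j (y i) = p i}

/-- The tilde cube with a given central index tuple. -/
def T (s k j : ℕ) (p : Fin s → ℤ) : Set (Torus s) :=
  {y | ∀ i, ∃ d : ℤ, |d| ≤ (3 * (k : ℤ) - 1) / 2 ∧
    cubeIdx k j (y i) ≡ p i + d [ZMOD (k ^ j : ℕ)]}

lemma measurableSet_A (s k j : ℕ) (p : Fin s → ℤ) : MeasurableSet (A s k j p) := by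
  have : A s k j p = ⋂ i, (fun y : Torus s => cubeIdx k j (y i)) ⁻¹' {p i} := by
    ext y; simp [A]
  rw [this]
  exact MeasurableSet.iInter fun i =>
    ((measurable_cubeIdx k j).comp (measurable_pi_apply i)) (measurableSet_singleton _)

lemma cubeAtom_eq (s k j : ℕ) (x : Torus s) :
    cubeAtom s k j x = A s k j (fun i => cubeIdx k j (x i)) := rfl

lemma tildeCube_eq (s k j : ℕ) (x : Torus s) :
    tildeCube s k j x = T s k j (fun i => cubeIdx k j (x i)) := by
  ext y
  simp only [tildeCube, T, Set.mem_setOf_eq]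
  refine forall_congr' fun i => exists_congr fun d => and_congr_right fun _ => ?_
  rw [← Int.cast_add, ZMod.intCast_eq_intCast_iff]

/-- per-coordinate counting bound -/
lemma coord_card (k j : ℕ) (hk : Odd k) (b : ℤ) :
    ((Finset.Ico (0 : ℤ) ((k : ℤ) ^ j)).filter
      (fun a => ∃ d : ℤ, |d| ≤ (3 * (k : ℤ) - 1) / 2 ∧ b ≡ a + d [ZMOD (k ^ j : ℕ)])).card
      ≤ 3 * k := by
  classical
  set D : ℤ := (3 * (k : ℤ) - 1) / 2 with hD
  set N : ℤ := (k : ℤ) ^ j with hN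
  have hsub : (Finset.Ico (0 : ℤ) N).filter
      (fun a => ∃ d : ℤ, |d| ≤ D ∧ b ≡ a + d [ZMOD (k ^ j : ℕ)]) ⊆
      (Finset.Icc (-D) D).image (fun d => (b - d) % N) := by
    intro a ha
    rw [Finset.mem_filter, Finset.mem_Ico] at ha
    obtain ⟨⟨ha0, haN⟩, d, hd, hmod⟩ := ha
    rw [Finset.mem_image]
    refine ⟨d, by rw [Finset.mem_Icc]; exact abs_le.1 hd, ?_⟩
    have hNcast : ((k ^ j : ℕ) : ℤ) = N := by push_cast [hN]; ring
    have h1 : a ≡ b - d [ZMOD (k ^ j : ℕ)] := by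
      have := hmod.symm.sub_right d
      simpa using this
    have h2 : a % N = (b - d) % N := by
      have := h1
      unfold Int.ModEq at this
      rwa [hNcast] at this
    rw [← h2, Int.emod_eq_of_lt ha0 haN]
  calc _ ≤ ((Finset.Icc (-D) D).image (fun d => (b - d) % N)).card :=
        Finset.card_le_card hsub
    _ ≤ (Finset.Icc (-D) D).card := Finset.card_image_le
    _ ≤ 3 * k := by
        rw [Int.card_Icc]
        obtain ⟨m, rfl⟩ := hk
        simp only [hD]
        push_cast
        omega

theorem main (s k j : ℕ) (hk : Odd k)
    (μ : Measure (Torus s)) [IsProbabilityMeasure μ] (δ : ENNReal) :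
    1 - δ * 3 ^ s * (k : ENNReal) ^ s ≤
      μ {x : Torus s | δ * μ (tildeCube s k j x) ≤ μ (cubeAtom s k j x)} := by
  classical
  have hk0 : 0 < k := hk.pos
  set N : ℤ := (k : ℤ) ^ j with hN
  set 𝓕 : Finset (Fin s → ℤ) := Fintype.piFinset (fun _ => Finset.Ico (0 : ℤ) N) with h𝓕
  set D : ℤ := (3 * (k : ℤ) - 1) / 2 with hD
  set B : Set (Torus s) := {x : Torus s | δ * μ (tildeCube s k j x) ≤ μ (cubeAtom s k j x)}
    with hB
  -- atoms partition the torus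
  have hidx_mem : ∀ x : Torus s, (fun i => cubeIdx k j (x i)) ∈ 𝓕 := fun x => by
    rw [h𝓕, Fintype.mem_piFinset]
    exact fun i => cubeIdx_mem k j hk0 (x i)
  have hcover : (⋃ p ∈ 𝓕, A s k j p) = Set.univ := by
    apply Set.eq_univ_of_forall
    intro y
    exact Set.mem_iUnion₂.2 ⟨_, hidx_mem y, fun i => rfl⟩
  have hdisj : (↑𝓕 : Set (Fin s → ℤ)).PairwiseDisjoint (A s k j) := by
    intro p _ q _ hpq
    refine Set.disjoint_left.2 fun y hyp hyq => hpq ?_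
    funext i
    rw [← hyp i, ← hyq i]
  have hsum1 : ∑ p ∈ 𝓕, μ (A s k j p) = 1 := by
    rw [← measure_biUnion_finset hdisj (fun p _ => measurableSet_A s k j p), hcover,
      measure_univ]
  -- the tilde cube of an atom is covered by at most (3k)^s atoms
  have hTsub : ∀ p : Fin s → ℤ, T s k j p ⊆
      ⋃ q ∈ 𝓕.filter (fun q => ∀ i, ∃ d : ℤ, |d| ≤ D ∧ q i ≡ p i + d [ZMOD (k ^ j : ℕ)]),
        A s k j q := by
    intro p y hy
    exact Set.mem_iUnion₂.2
      ⟨_, Finset.mem_filter.2 ⟨hidx_mem y, hy⟩, fun i => rfl⟩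
  have hTle : ∀ p : Fin s → ℤ, μ (T s k j p) ≤
      ∑ q ∈ 𝓕.filter (fun q => ∀ i, ∃ d : ℤ, |d| ≤ D ∧ q i ≡ p i + d [ZMOD (k ^ j : ℕ)]),
        μ (A s k j q) := fun p =>
    (measure_mono (hTsub p)).trans (measure_biUnion_finset_le _ _)
  -- counting: each atom lies in at most (3k)^s tilde cubes
  have hcount : ∀ q : Fin s → ℤ,
      (𝓕.filter (fun p => ∀ i, ∃ d : ℤ, |d| ≤ D ∧ q i ≡ p i + d [ZMOD (k ^ j : ℕ)])).card
        ≤ (3 * k) ^ s := by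
    intro q
    have heq : 𝓕.filter (fun p => ∀ i, ∃ d : ℤ, |d| ≤ D ∧ q i ≡ p i + d [ZMOD (k ^ j : ℕ)])
        = Fintype.piFinset (fun i => (Finset.Ico (0 : ℤ) N).filter
            (fun a => ∃ d : ℤ, |d| ≤ D ∧ q i ≡ a + d [ZMOD (k ^ j : ℕ)])) := by
      ext p
      simp only [h𝓕, Finset.mem_filter, Fintype.mem_piFinset, ← forall_and]
    rw [heq, Fintype.card_piFinset]
    calc _ ≤ ∏ _i : Fin s, (3 * k) := by
          apply Finset.prod_le_prod' 
          intro i _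
          exact coord_card k j hk (q i)
      _ = (3 * k) ^ s := by simp
  -- total tilde measure bound
  have hTsum : ∑ p ∈ 𝓕, μ (T s k j p) ≤ ((3 * k) ^ s : ℕ) := by
    calc ∑ p ∈ 𝓕, μ (T s k j p)
        ≤ ∑ p ∈ 𝓕, ∑ q ∈ 𝓕.filter
            (fun q => ∀ i, ∃ d : ℤ, |d| ≤ D ∧ q i ≡ p i + d [ZMOD (k ^ j : ℕ)]),
            μ (A s k j q) := Finset.sum_le_sum fun p _ => hTle p
      _ = ∑ p ∈ 𝓕, ∑ q ∈ 𝓕,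
            if (∀ i, ∃ d : ℤ, |d| ≤ D ∧ q i ≡ p i + d [ZMOD (k ^ j : ℕ)])
            then μ (A s k j q) else 0 := by
            refine Finset.sum_congr rfl fun p _ => ?_
            rw [Finset.sum_filter]
      _ = ∑ q ∈ 𝓕, ∑ p ∈ 𝓕,
            if (∀ i, ∃ d : ℤ, |d| ≤ D ∧ q i ≡ p i + d [ZMOD (k ^ j : ℕ)])
            then μ (A s k j q) else 0 := Finset.sum_comm
      _ = ∑ q ∈ 𝓕,
            ((𝓕.filter (fun p => ∀ i, ∃ d : ℤ, |d| ≤ D ∧ q i ≡ p i + d [ZMOD (k ^ j : ℕ)])).card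
              : ENNReal) * μ (A s k j q) := by
            refine Finset.sum_congr rfl fun q _ => ?_
            rw [← Finset.sum_filter, Finset.sum_const, nsmul_eq_mul]
      _ ≤ ∑ q ∈ 𝓕, (((3 * k) ^ s : ℕ) : ENNReal) * μ (A s k j q) :=
            Finset.sum_le_sum fun q _ =>
              mul_le_mul_left (by exact_mod_cast hcount q) _
      _ = ((3 * k) ^ s : ℕ) * ∑ q ∈ 𝓕, μ (A s k j q) := by rw [Finset.mul_sum]
      _ = ((3 * k) ^ s : ℕ) := by rw [hsum1, mul_one]
  -- the complement of B is covered by "bad" atoms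
  set Bad : Finset (Fin s → ℤ) := 𝓕.filter (fun p => μ (A s k j p) < δ * μ (T s k j p))
    with hBad
  have hBcsub : Bᶜ ⊆ ⋃ p ∈ Bad, A s k j p := by
    intro x hx
    rw [Set.mem_compl_iff, hB, Set.mem_setOf_eq, not_le] at hx
    rw [cubeAtom_eq, tildeCube_eq] at hx
    exact Set.mem_iUnion₂.2
      ⟨_, Finset.mem_filter.2 ⟨hidx_mem x, hx⟩, fun i => rfl⟩
  have hBc : μ Bᶜ ≤ δ * ((3 * k) ^ s : ℕ) := by
    calc μ Bᶜ ≤ ∑ p ∈ Bad, μ (A s k j p) :=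
          (measure_mono hBcsub).trans (measure_biUnion_finset_le _ _)
      _ ≤ ∑ p ∈ Bad, δ * μ (T s k j p) := by
          refine Finset.sum_le_sum fun p hp => ?_
          rw [hBad, Finset.mem_filter] at hp
          exact hp.2.le
      _ = δ * ∑ p ∈ Bad, μ (T s k j p) := by rw [Finset.mul_sum]
      _ ≤ δ * ∑ p ∈ 𝓕, μ (T s k j p) := by
          refine mul_le_mul_right (Finset.sum_le_sum_of_subset ?_) δ
          exact Finset.filter_subset _ _
      _ ≤ δ * ((3 * k) ^ s : ℕ) := mul_le_mul_right hTsum δ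
  have hcast : (((3 * k) ^ s : ℕ) : ENNReal) = 3 ^ s * (k : ENNReal) ^ s := by
    push_cast
    rw [mul_pow]
  rw [tsub_le_iff_right]
  calc (1 : ENNReal) = μ Set.univ := (measure_univ).symm
    _ ≤ μ (B ∪ Bᶜ) := by rw [Set.union_compl_self]
    _ ≤ μ B + μ Bᶜ := measure_union_le _ _
    _ ≤ μ B + δ * ((3 * k) ^ s : ℕ) := add_le_add_right hBc _
    _ = μ B + δ * 3 ^ s * (k : ENNReal) ^ s := by rw [hcast, mul_assoc]

end ManeAux

theorem mane_partition_lemma_tilde (s k j : ℕ) (hk : Odd k) (hj : 1 ≤ j)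
    (μ : Measure (Torus s)) [IsProbabilityMeasure μ] (δ : ENNReal) (hδ : 0 < δ) :
    1 - δ * 3 ^ s * (k : ENNReal) ^ s ≤
      μ {x : Torus s | δ * μ (tildeCube s k j x) ≤ μ (cubeAtom s k j x)} :=
  ManeAux.main s k j hk μ δ

end
end

section
/- Let f : M → M preserve an ergodic Borel probability μ on a metric space M. Let Ω(r, ρ) ⊆ M (r > 0, ρ > 1) be a Borel set of points x such that: whenever y ∈ B(x, r') for some 0 < r' ≤ r and f^t(y) ∈ B(x, r') for some t > 0, there exists 0 ≤ t₁ < t with f^{t₁}(y) ∈ closure(B(x, ρ r')) ∩ Ω, where Ω ⊆ M is a fixed Borel set. Suppose x ∈ Ω(r, ρ), and let P, P̂ be Borel sets with x ∈ P, P ⊆ B(x, r'') for some r'' ≤ r, closure(B(x, ρ r'')) ⊆ P̂, and μ(P) ≥ δ μ(P̂). Then μ(P̂ ∩ Ω) ≥ δ μ(P̂). -/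
/- STATEMENT 3: Lemma (lerg).  Let f preserve an ergodic probability μ on a compact
metric space M, let Ω be a Borel set and let x satisfy the return-shadowing property
with parameters r > 0, ρ > 1 relative to Ω.  If P, P̂ are Borel sets with
x ∈ P ⊆ B(x, r''), r'' ≤ r, closure(B(x, ρ r'')) ⊆ P̂ and μ(P) ≥ δ μ(P̂), then
μ(P̂ ∩ Ω) ≥ δ μ(P̂). -/

open MeasureTheory Metric

theorem lerg {M : Type*} [MetricSpace M] [CompactSpace M]
    [MeasurableSpace M] [BorelSpace M]
    (f : M → M) (hf : Measurable f)
    (μ : Measure M) [IsProbabilityMeasure μ]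
    (hinv : MeasurePreserving f μ μ) (herg : Ergodic f μ)
    (Ω : Set M) (hΩ : MeasurableSet Ω)
    (r ρ : ℝ) (hr : 0 < r) (hρ : 1 < ρ)
    (x : M)
    (hx : ∀ (y : M) (r' : ℝ) (t : ℕ), 0 < r' → r' ≤ r → y ∈ ball x r' → 0 < t →
      f^[t] y ∈ ball x r' →
      ∃ t₁, t₁ < t ∧ f^[t₁] y ∈ closure (ball x (ρ * r')) ∩ Ω)
    (P Phat : Set M) (hPm : MeasurableSet P) (hPhatm : MeasurableSet Phat)
    (δ : ENNReal)
    (r'' : ℝ) (hr'' : r'' ≤ r)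
    (hxP : x ∈ P) (hPball : P ⊆ ball x r'')
    (hball : closure (ball x (ρ * r'')) ⊆ Phat)
    (hδP : δ * μ Phat ≤ μ P) :
    δ * μ Phat ≤ μ (Phat ∩ Ω) := by
  classical
  have hr''pos : 0 < r'' := by
    have := hPball hxP
    simpa using this
  obtain ⟨Q, hQdef⟩ : ∃ Q : Set M, Q = closure (ball x (ρ * r'')) ∩ Ω := ⟨_, rfl⟩
  have hQm : MeasurableSet Q := hQdef ▸ isClosed_closure.measurableSet.inter hΩ
  have hQsub : Q ⊆ Phat ∩ Ω := hQdef ▸ fun z hz => ⟨hball hz.1, hz.2⟩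
  -- the deterministic counting lemma
  have key : ∀ (y : M) (N : ℕ),
      ((Finset.range N).filter (fun n => f^[n] y ∈ P)).card ≤
      ((Finset.range N).filter (fun n => f^[n] y ∈ Q)).card + 1 := by
    intro y N
    set T := (Finset.range N).filter (fun n => f^[n] y ∈ P) with hT
    set S := (Finset.range N).filter (fun n => f^[n] y ∈ Q) with hS
    set T' := T.filter (fun n => ∃ m ∈ T, n < m) with hT'
    -- every n ∈ T' produces a Q-visit m with n ≤ m, and m < any element of T above n
    have prod : ∀ n ∈ T', ∃ m, m ∈ S ∧ n ≤ m ∧ ∀ k ∈ T, n < k → m < k := by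
      intro n hn
      rcases Finset.mem_filter.mp hn with ⟨hnT, hex⟩
      have hex' : ∃ k, k ∈ T ∧ n < k := by
        rcases hex with ⟨m, hm1, hm2⟩; exact ⟨m, hm1, hm2⟩
      set n2 := Nat.find hex' with hn2
      obtain ⟨hn2T, hn2gt⟩ := Nat.find_spec hex'
      have hnP : f^[n] y ∈ P := (Finset.mem_filter.mp hnT).2
      have hn2P : f^[n2] y ∈ P := (Finset.mem_filter.mp hn2T).2
      have ht : 0 < n2 - n := Nat.sub_pos_of_lt hn2gt
      have hiter : f^[n2 - n] (f^[n] y) = f^[n2] y := by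
        rw [← Function.iterate_add_apply]
        congr 1
        omega
      obtain ⟨t₁, ht₁, hmem⟩ :=
        hx (f^[n] y) r'' (n2 - n) hr''pos hr'' (hPball hnP) ht
          (by rw [hiter]; exact hPball hn2P)
      refine ⟨n + t₁, ?_, Nat.le_add_right n t₁, ?_⟩
      · have hn2N : n2 < N := Finset.mem_range.mp (Finset.mem_filter.mp hn2T).1
        have hlt : n + t₁ < n2 := by omega
        refine Finset.mem_filter.mpr ⟨Finset.mem_range.mpr (by omega), ?_⟩
        have : f^[n + t₁] y = f^[t₁] (f^[n] y) := by
          rw [add_comm, Function.iterate_add_apply]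
        rw [this, hQdef]
        exact hmem
      · intro k hk hklt
        have : n2 ≤ k := Nat.find_min' hex' ⟨hk, hklt⟩
        omega
    -- choose such m's
    choose F hFS hFle hFlt using prod
    have hinj : ∀ a ∈ T'.attach, ∀ b ∈ T'.attach,
        F a.1 a.2 = F b.1 b.2 → a = b := by
      intro a _ b _ hab
      by_contra hne
      have hne' : a.1 ≠ b.1 := fun h => hne (Subtype.ext h)
      rcases lt_or_gt_of_ne hne' with h | h
      · have hbT : b.1 ∈ T := Finset.mem_filter.mp b.2 |>.1
        have h1 : F a.1 a.2 < b.1 := hFlt a.1 a.2 b.1 hbT h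
        have h2 : b.1 ≤ F b.1 b.2 := hFle b.1 b.2
        omega
      · have haT : a.1 ∈ T := Finset.mem_filter.mp a.2 |>.1
        have h1 : F b.1 b.2 < a.1 := hFlt b.1 b.2 a.1 haT h
        have h2 : a.1 ≤ F a.1 a.2 := hFle a.1 a.2
        omega
    have hcard' : T'.card ≤ S.card := by
      have := Finset.card_le_card_of_injOn (fun a : {x // x ∈ T'} => F a.1 a.2)
        (fun a _ => hFS a.1 a.2) (fun a ha b hb h => hinj a ha b hb h)
      simpa using this
    have hdiff : (T \ T').card ≤ 1 := by
      rw [Finset.card_le_one]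
      intro a ha b hb
      rcases Finset.mem_sdiff.mp ha with ⟨haT, haN⟩
      rcases Finset.mem_sdiff.mp hb with ⟨hbT, hbN⟩
      by_contra hne
      rcases lt_or_gt_of_ne hne with h | h
      · exact haN (Finset.mem_filter.mpr ⟨haT, ⟨b, hbT, h⟩⟩)
      · exact hbN (Finset.mem_filter.mpr ⟨hbT, ⟨a, haT, h⟩⟩)
    have : T.card ≤ T'.card + (T \ T').card := by
      have hsub : T ⊆ T' ∪ (T \ T') := by
        intro a ha
        by_cases h : a ∈ T'
        · exact Finset.mem_union_left _ h
        · exact Finset.mem_union_right _ (Finset.mem_sdiff.mpr ⟨ha, h⟩)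
      calc T.card ≤ (T' ∪ (T \ T')).card := Finset.card_le_card hsub
        _ ≤ T'.card + (T \ T').card := Finset.card_union_le _ _
    omega
  -- integration lemma
  have int_count : ∀ (A : Set M), MeasurableSet A → ∀ N : ℕ,
      ∫⁻ y, (((Finset.range N).filter (fun n => f^[n] y ∈ A)).card : ENNReal) ∂μ
        = N * μ A := by
    intro A hA N
    have hrw : ∀ y : M, (((Finset.range N).filter (fun n => f^[n] y ∈ A)).card : ENNReal)
        = ∑ n ∈ Finset.range N, Set.indicator A (fun _ => (1 : ENNReal)) (f^[n] y) := by
      intro y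
      rw [Finset.card_filter]
      push_cast
      refine Finset.sum_congr rfl fun n _ => ?_
      by_cases h : f^[n] y ∈ A <;> simp [h, Set.indicator]
    simp only [hrw]
    rw [lintegral_finset_sum]
    · have : ∀ n ∈ Finset.range N,
          ∫⁻ y, Set.indicator A (fun _ => (1 : ENNReal)) (f^[n] y) ∂μ = μ A := by
        intro n _
        have hmp : MeasurePreserving f^[n] μ μ := hinv.iterate n
        rw [hmp.lintegral_comp (measurable_const.indicator hA)]
        simp [lintegral_indicator, hA]
      rw [Finset.sum_congr rfl this]
      simp [mul_comm]
    · intro n _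
      exact (measurable_const.indicator hA).comp (hf.iterate n)
  -- now μ P ≤ μ Q
  have hPQ : μ P ≤ μ Q := by
    have hineq : ∀ N : ℕ, (N : ENNReal) * μ P ≤ (N : ENNReal) * μ Q + 1 := by
      intro N
      have h1 : ∫⁻ y, (((Finset.range N).filter (fun n => f^[n] y ∈ P)).card : ENNReal) ∂μ
          ≤ ∫⁻ y, ((((Finset.range N).filter (fun n => f^[n] y ∈ Q)).card : ENNReal) + 1) ∂μ := by
        refine lintegral_mono fun y => ?_
        have := key y N
        have h2 := (Nat.cast_le (α := ENNReal)).mpr this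
        push_cast at h2
        convert h2 using 3
      rw [int_count P hPm N, lintegral_add_right _ measurable_const,
        lintegral_const, measure_univ, mul_one] at h1
      rwa [int_count Q hQm N] at h1
    -- conclude
    have hPfin : μ P ≠ ⊤ := measure_ne_top μ P
    have hQfin : μ Q ≠ ⊤ := measure_ne_top μ Q
    rw [← ENNReal.toReal_le_toReal hPfin hQfin]
    refine le_of_forall_pos_le_add fun ε hε => ?_
    obtain ⟨N, hN⟩ := exists_nat_one_div_lt hε
    have hNpos : (0:ℝ) < (N:ℝ) + 1 := by positivity
    have h := hineq (N + 1)
    have h' : ((N:ℝ) + 1) * (μ P).toReal ≤ ((N:ℝ) + 1) * (μ Q).toReal + 1 := by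
      have hfin : ((N + 1 : ℕ) : ENNReal) * μ Q + 1 ≠ ⊤ := by
        refine ENNReal.add_ne_top.mpr ⟨ENNReal.mul_ne_top (by simp) hQfin, by simp⟩
      have := ENNReal.toReal_mono hfin h
      rw [ENNReal.toReal_mul, ENNReal.toReal_add (ENNReal.mul_ne_top (by simp) hQfin) (by simp),
        ENNReal.toReal_mul, ENNReal.toReal_natCast] at this
      simpa using this
    have h'' : (μ P).toReal ≤ (((N:ℝ) + 1) * (μ Q).toReal + 1) / ((N:ℝ) + 1) := by
      rw [le_div_iff₀ hNpos]
      nlinarith [h']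
    rw [add_div, mul_div_cancel_left₀ _ (ne_of_gt hNpos)] at h''
    calc (μ P).toReal ≤ (μ Q).toReal + 1 / ((N:ℝ) + 1) := h''
      _ ≤ (μ Q).toReal + ε := by linarith [le_of_lt hN]
  calc δ * μ Phat ≤ μ P := hδP
    _ ≤ μ Q := hPQ
    _ ≤ μ (Phat ∩ Ω) := measure_mono hQsub
end
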